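/- Suppose a double complex D^{*,*} of R-modules has exact rows. Then its right truncated totalisation rtTot(D), with n-th term Π_{p≤0} D^{p,n-p} ⊕ ⊕_{p>0} D^{p,n-p} and differential Σ_{p≤k} a_p z^p ↦ Σ_{p≤k+1} (d_h(a_{p-1}) + d_v(a_p)) z^p, is acyclic. -/
import Mathlib


/-- Transport along equalities of indices of a doubly indexed family of modules. -/
def castM {R : Type} [Ring R] (D : ℤ → ℤ → Type)
    [∀ p q, AddCommGroup (D p q)] [∀ p q, Module R (D p q)] :
    ∀ {p q p' q' : ℤ}, p = p' → q = q' → (D p q →ₗ[R] D p' q')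
  | _, _, _, _, rfl, rfl => LinearMap.id

/-- The differential `d_h + d_v` of the totalisation of a double complex, with `n`-th term
the full product `∀ p, D p (n - p)`.  Restricted to elements whose support is bounded above
(in `p`) this is the differential of the right truncated totalisation `rtTot`. -/
def totd {R : Type} [Ring R] (D : ℤ → ℤ → Type)
    [∀ p q, AddCommGroup (D p q)] [∀ p q, Module R (D p q)]
    (dh : ∀ p q, D p q →ₗ[R] D (p + 1) q) (dv : ∀ p q, D p q →ₗ[R] D p (q + 1))
    (n : ℤ) : (∀ p, D p (n - p)) →ₗ[R] (∀ p, D p (n + 1 - p)) :=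
  LinearMap.pi fun p =>
    (castM D (by omega : p - 1 + 1 = p) (by omega : n - (p - 1) = n + 1 - p)).comp
        ((dh (p - 1) (n - (p - 1))).comp (LinearMap.proj (p - 1)))
      + (castM D rfl (by omega : n - p + 1 = n + 1 - p)).comp
        ((dv p (n - p)).comp (LinearMap.proj p))

section Aux
variable {R : Type} [Ring R] (D : ℤ → ℤ → Type)
    [∀ p q, AddCommGroup (D p q)] [∀ p q, Module R (D p q)]

@[simp] lemma castM_id {p q : ℤ} (h : p = p) (h' : q = q) (x : D p q) :
    castM (R := R) D h h' x = x := rfl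

lemma castM_irrel {p q p' q' : ℤ} (h h2 : p = p') (h' h2' : q = q') (x : D p q) :
    castM (R := R) D h h' x = castM (R := R) D h2 h2' x := rfl

@[simp] lemma castM_castM {p q p' q' p'' q'' : ℤ} (h1 : p = p') (h1' : q = q')
    (h2 : p' = p'') (h2' : q' = q'') (x : D p q) :
    castM (R := R) D h2 h2' (castM (R := R) D h1 h1' x)
      = castM (R := R) D (h1.trans h2) (h1'.trans h2') x := by
  subst h1; subst h1'; subst h2; subst h2'; rfl

@[simp] lemma castM_zero {p q p' q' : ℤ} (h : p = p') (h' : q = q') :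
    castM (R := R) D h h' (0 : D p q) = 0 := map_zero _

lemma castM_natural {c c' : ℤ → ℤ → ℤ} (G : ∀ p q, D p q →ₗ[R] D (c p q) (c' p q))
    {p q p' q' : ℤ} (h : p = p') (h' : q = q')
    (hc : c p q = c p' q') (hc' : c' p q = c' p' q') (x : D p q) :
    G p' q' (castM (R := R) D h h' x) = castM (R := R) D hc hc' (G p q x) := by
  subst h; subst h'; rfl

lemma castM_inj {p q p' q' : ℤ} (h : p = p') (h' : q = q') {x y : D p q}
    (hxy : castM (R := R) D h h' x = castM (R := R) D h h' y) : x = y := by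
  subst h; subst h'; exact hxy

lemma castM_congr_fun {ι : Type} {c c' : ι → ℤ} (f : ∀ i, D (c i) (c' i))
    {i i' : ι} (h : i = i') {P Q : ℤ}
    (e1 : c i = P) (e2 : c' i = Q) (e3 : c i' = P) (e4 : c' i' = Q) :
    castM (R := R) D e1 e2 (f i) = castM (R := R) D e3 e4 (f i') := by subst h; rfl

variable (Dh : ∀ p q, D p q →ₗ[R] D (p + 1) q) (Dv : ∀ p q, D p q →ₗ[R] D p (q + 1))
    (n : ℤ) (a : ∀ p, D p (n + 1 - p))

open Classical in
noncomputable def Fstep (p : ℤ) (z : D p (n - p)) : D (p - 1) (n - (p - 1)) :=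
  if h : ∃ y, Dh (p - 1) (n - (p - 1)) y
      = castM (R := R) D (by omega) (by omega) (a p)
        - castM (R := R) D (by omega) (by omega) (Dv p (n - p) z)
  then h.choose else 0

lemma Fstep_spec {p : ℤ} {z : D p (n - p)}
    (h1 : p = p - 1 + 1) (h2 : n + 1 - p = n - (p - 1)) (h3 : n - p + 1 = n - (p - 1))
    (hex : ∃ y, Dh (p - 1) (n - (p - 1)) y
      = castM (R := R) D h1 h2 (a p) - castM (R := R) D h1 h3 (Dv p (n - p) z)) :
    Dh (p - 1) (n - (p - 1)) (Fstep D Dh Dv n a p z)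
      = castM (R := R) D h1 h2 (a p) - castM (R := R) D h1 h3 (Dv p (n - p) z) := by
  unfold Fstep
  split
  · next h => exact h.choose_spec
  · next h => exact absurd hex h

lemma Fstep_congr {p p' : ℤ} (h : p = p') (hq : n - p = n - p') (z : D p (n - p))
    {P Q : ℤ} (e1 : p - 1 = P) (e2 : n - (p - 1) = Q) (e3 : p' - 1 = P) (e4 : n - (p' - 1) = Q) :
    castM (R := R) D e1 e2 (Fstep D Dh Dv n a p z)
      = castM (R := R) D e3 e4 (Fstep D Dh Dv n a p' (castM (R := R) D h hq z)) := by
  subst h; rfl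

noncomputable def gseq (k : ℤ) : ∀ m : ℕ, D (k - m) (n - (k - m))
  | 0 => 0
  | (m + 1) => castM (R := R) D
      (show k - (m : ℤ) - 1 = k - ((m : ℕ) + 1 : ℕ) by push_cast; omega)
      (show n - (k - (m : ℤ) - 1) = n - (k - ((m : ℕ) + 1 : ℕ)) by push_cast; omega)
      (Fstep D Dh Dv n a (k - m) (gseq k m))

lemma gseq_congr {k : ℤ} {m m' : ℕ} (hmm : m = m') {P Q : ℤ}
    (h : k - m = P) (h' : n - (k - m) = Q) (h2 : k - m' = P) (h2' : n - (k - m') = Q) :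
    castM (R := R) D h h' (gseq D Dh Dv n a k m)
      = castM (R := R) D h2 h2' (gseq D Dh Dv n a k m') := by subst hmm; rfl

lemma castM_fun_eq {c' : ℤ → ℤ} (f : ∀ i : ℤ, D i (c' i)) {p p' : ℤ}
    (h : p = p') (h' : c' p = c' p') : castM (R := R) D h h' (f p) = f p' := by
  subst h; rfl

lemma castM_gseq_succ (k : ℤ) (m : ℕ) {p : ℤ} (hp : k - (m : ℤ) = p)
    (e1 : k - ((m + 1 : ℕ) : ℤ) = p - 1) (e2 : n - (k - ((m + 1 : ℕ) : ℤ)) = n - (p - 1))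
    (e3 : n - (k - (m : ℤ)) = n - p) :
    castM (R := R) D e1 e2 (gseq D Dh Dv n a k (m + 1))
      = Fstep D Dh Dv n a p (castM (R := R) D hp e3 (gseq D Dh Dv n a k m)) := by
  subst hp
  rw [gseq, castM_castM, castM_id, castM_id]

lemma gseq_zero_castM (k : ℤ) {P Q : ℤ} (e1 : k - ((0 : ℕ) : ℤ) = P)
    (e2 : n - (k - ((0 : ℕ) : ℤ)) = Q) :
    castM (R := R) D e1 e2 (gseq D Dh Dv n a k 0) = 0 := by
  rw [show gseq D Dh Dv n a k 0 = 0 from rfl]; exact castM_zero D _ _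

end Aux

/-- Suppose a double complex `D` of `R`-modules (anticommuting differentials squaring to
zero) has exact rows.  Then its right truncated totalisation — whose `n`-th term consists of
the elements of `∀ p, D p (n - p)` which vanish for `p` sufficiently large — is acyclic:
every right-truncated cocycle is the boundary of a right-truncated element. -/
theorem rtTot_acyclic_of_exact_rows (R : Type) [Ring R]
    (D : ℤ → ℤ → Type)
    [∀ p q, AddCommGroup (D p q)] [∀ p q, Module R (D p q)]
    (Dh : ∀ p q, D p q →ₗ[R] D (p + 1) q) (Dv : ∀ p q, D p q →ₗ[R] D p (q + 1))
    (hDhh : ∀ p q (x : D p q), Dh (p + 1) q (Dh p q x) = 0)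
    (hDvv : ∀ p q (x : D p q), Dv p (q + 1) (Dv p q x) = 0)
    (hDanti : ∀ p q (x : D p q), Dh p (q + 1) (Dv p q x) + Dv (p + 1) q (Dh p q x) = 0)
    -- the rows are exact:
    (hrows : ∀ p q (x : D (p + 1) q), Dh (p + 1) q x = 0 → ∃ y : D p q, Dh p q y = x) :
    ∀ (n : ℤ) (a : ∀ p, D p (n + 1 - p)),
      (∃ k : ℤ, ∀ p > k, a p = 0) →
      totd D Dh Dv (n + 1) a = 0 →
      ∃ b : ∀ p, D p (n - p), (∃ k : ℤ, ∀ p > k, b p = 0) ∧ totd D Dh Dv n b = a := by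
  intro n a hbd hcoc
  obtain ⟨k, hk⟩ := hbd
  have hcocp : ∀ p : ℤ, castM (R := R) D (show p - 1 + 1 = p by omega)
        (show n + 1 - (p - 1) = n + 1 + 1 - p by omega)
        (Dh (p - 1) (n + 1 - (p - 1)) (a (p - 1)))
      + castM (R := R) D rfl (show n + 1 - p + 1 = n + 1 + 1 - p by omega)
        (Dv p (n + 1 - p) (a p)) = 0 := fun p => congrFun hcoc p
  set b : ∀ p, D p (n - p) := fun p =>
    if h : p ≤ k then
      castM (R := R) D (show k - ((k - p).toNat : ℤ) = p by omega)
        (show n - (k - ((k - p).toNat : ℤ)) = n - p by omega)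
        (gseq D Dh Dv n a k (k - p).toNat)
    else 0 with hbdef
  have hb1 : ∀ p, k < p → b p = 0 := by
    intro p hp; rw [hbdef]; exact dif_neg (by omega)
  have hb2 : ∀ p, p ≤ k → ∀ (h1 : k - ((k - p).toNat : ℤ) = p)
      (h2 : n - (k - ((k - p).toNat : ℤ)) = n - p),
      b p = castM (R := R) D h1 h2 (gseq D Dh Dv n a k (k - p).toNat) := by
    intro p hp h1 h2; rw [hbdef]; exact dif_pos hp
  have htot : ∀ p : ℤ, totd D Dh Dv n b p
      = castM (R := R) D (show p - 1 + 1 = p by omega)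
          (show n - (p - 1) = n + 1 - p by omega) (Dh (p - 1) (n - (p - 1)) (b (p - 1)))
        + castM (R := R) D rfl (show n - p + 1 = n + 1 - p by omega)
          (Dv p (n - p) (b p)) := fun p => rfl
  -- the key step
  have hstep : ∀ p : ℤ, p ≤ k → totd D Dh Dv n b (p + 1) = a (p + 1) →
      totd D Dh Dv n b p = a p := by
    intro p hp ih
    have h1 : p = p - 1 + 1 := by omega
    have h2 : n + 1 - p = n - (p - 1) := by omega
    have h3 : n - p + 1 = n - (p - 1) := by omega
    -- b (p-1) in terms of Fstep
    have hbp1 : b (p - 1) = Fstep D Dh Dv n a p (b p) := by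
      rw [hb2 (p - 1) (by omega) (by omega) (by omega)]
      exact (gseq_congr D Dh Dv n a (show (k - (p - 1)).toNat = (k - p).toNat + 1 by omega)
          (by omega) (by omega) (by push_cast; omega) (by push_cast; omega)).trans
        ((castM_gseq_succ D Dh Dv n a k (k - p).toNat (by omega) _ _ (by omega)).trans
          (congrArg (Fstep D Dh Dv n a p) (hb2 p hp (by omega) (by omega)).symm))
    -- the element we must lift is a cocycle in its row
    have hX : Dh (p - 1 + 1) (n - (p - 1))
        (castM (R := R) D h1 h2 (a p) - castM (R := R) D h1 h3 (Dv p (n - p) (b p))) = 0 := by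
      -- transported cocycle identity
      have w1 : p = p + 1 - 1 := by omega
      have w2 : n + 1 - p = n + 1 - (p + 1 - 1) := by omega
      have hc1 := hcocp (p + 1)
      rw [show a (p + 1 - 1) = castM (R := R) D w1 w2 (a p) from
          (castM_fun_eq D a w1 w2).symm] at hc1
      rw [castM_natural D Dh w1 w2 (by omega) (by omega) (a p), castM_castM] at hc1
      -- transported equation from the inductive hypothesis
      have y1 : p = p + 1 - 1 := by omega
      have y2 : n - p = n - (p + 1 - 1) := by omega
      have hi := (htot (p + 1)).symm.trans ih
      rw [show b (p + 1 - 1) = castM (R := R) D y1 y2 (b p) from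
          (castM_fun_eq D b y1 y2).symm] at hi
      rw [castM_natural D Dh y1 y2 (by omega) (by omega) (b p), castM_castM] at hi
      -- apply Dv to hi
      have hv := congrArg (Dv (p + 1) (n + 1 - (p + 1))) hi
      rw [map_add, castM_natural D Dv (by omega : p + 1 = p + 1) (by omega) (by omega)
          (by omega) (Dh p (n - p) (b p)),
        castM_natural D Dv (by omega : p + 1 = p + 1) (by omega) (by omega) (by omega)
          (Dv (p + 1) (n - (p + 1)) (b (p + 1))),
        hDvv, castM_zero, add_zero] at hv
      -- combine
      rw [← hv] at hc1
      rw [castM_castM] at hc1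
      have hc2 : castM (R := R) D (show p + 1 = p + 1 by omega)
            (show n + 1 - p = n + 1 + 1 - (p + 1) by omega) (Dh p (n + 1 - p) (a p))
          = - castM (R := R) D (show p + 1 = p + 1 by omega)
            (show n - p + 1 = n + 1 + 1 - (p + 1) by omega)
            (Dv (p + 1) (n - p) (Dh p (n - p) (b p))) :=
        eq_neg_of_add_eq_zero_left hc1
      have hc3 := congrArg (castM (R := R) D (show p + 1 = p - 1 + 1 + 1 by omega)
        (show n + 1 + 1 - (p + 1) = n - (p - 1) by omega)) hc2
      rw [castM_castM, map_neg, castM_castM] at hc3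
      -- now the goal
      rw [map_sub, castM_natural D Dh h1 h2 (by omega) (by omega) (a p),
        castM_natural D Dh h1 h3 (by omega) (by omega) (Dv p (n - p) (b p)),
        eq_neg_of_add_eq_zero_left (hDanti p (n - p) (b p)), map_neg, sub_neg_eq_add]
      exact add_eq_zero_iff_eq_neg.mpr hc3
    have exF : ∃ y, Dh (p - 1) (n - (p - 1)) y
        = castM (R := R) D h1 h2 (a p) - castM (R := R) D h1 h3 (Dv p (n - p) (b p)) :=
      hrows (p - 1) (n - (p - 1)) _ hX
    have hF := Fstep_spec D Dh Dv n a h1 h2 h3 exF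
    rw [htot p, hbp1, hF, map_sub, castM_castM, castM_castM, castM_id]
    exact sub_add_cancel _ _
  -- base of the induction
  have hbk : b (k + 1 - 1) = 0 := by
    rw [hb2 (k + 1 - 1) (by omega) (by omega) (by omega)]
    exact (gseq_congr D Dh Dv n a (show (k - (k + 1 - 1)).toNat = 0 by omega)
        (by omega) (by omega) (by push_cast; omega) (by push_cast; omega)).trans
      (gseq_zero_castM D Dh Dv n a k _ _)
  have base : totd D Dh Dv n b (k + 1) = a (k + 1) := by
    rw [htot (k + 1), hb1 (k + 1) (by omega), hbk, map_zero, map_zero, map_zero, map_zero,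
      add_zero]
    exact (hk (k + 1) (by omega)).symm
  have key : ∀ m : ℕ, totd D Dh Dv n b (k + 1 - m) = a (k + 1 - m) := by
    intro m
    induction m with
    | zero =>
      rw [show (k + 1 - ((0 : ℕ) : ℤ)) = k + 1 by push_cast; omega]
      exact base
    | succ m ih =>
      rw [show (k + 1 - ((m : ℕ) : ℤ)) = (k + 1 - (((m + 1 : ℕ)) : ℤ)) + 1 by
        push_cast; omega] at ih
      exact hstep _ (by push_cast; omega) ih
  refine ⟨b, ⟨k, fun p hp => hb1 p hp⟩, ?_⟩
  funext p
  by_cases hpk : p ≤ k + 1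
  · have := key (k + 1 - p).toNat
    rwa [show (k + 1 - ((k + 1 - p).toNat : ℤ)) = p by omega] at this
  · rw [htot p, hb1 p (by omega), hb1 (p - 1) (by omega), map_zero, map_zero, map_zero,
      map_zero, add_zero]
    exact (hk p (by omega)).symm
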